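/- On 𝔗_b, the modified uncentred triangular maximal operator 𝒰' is unbounded on L^p for every p ≤ 2: for a point o and descendants x of o at even distance |x|, one has 𝒰'δ_o(x) ≥ 1/(2b^{|x|/2} + 1), and ∑_{j≥0} b^{2j}(2b^j + 1)^{−p} diverges for p ≤ 2. -/

import Mathlib

open scoped ENNReal NNReal
open Set

/-- A locally finite tree presented via the data induced by a fixed geodesic ray `ω`:
a predecessor map `pred`, a height (Busemann) function `ht` increasing by one along `pred`,
finite successor sets, and connectedness (any two vertices have a common ancestor). -/
structure TreeData (V : Type*) where
  pred : V → V
  ht : V → ℤ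
  ht_pred : ∀ x, ht (pred x) = ht x + 1
  fiber_finite : ∀ x, {y | pred y = x}.Finite
  connected : ∀ x y, ∃ k l : ℕ, pred^[k] x = pred^[l] y

namespace TreeData

variable {V : Type*}

/-- The set of successors of a vertex. -/
def succs (t : TreeData V) (x : V) : Set V := {y | t.pred y = x}

/-- Every vertex has at least 3 neighbours, i.e. at least 2 successors. -/
def Thick (t : TreeData V) : Prop := ∀ x, 2 ≤ (t.succs x).ncard

/-- Homogeneous tree `𝔗_b`: every vertex has exactly `b+1` neighbours, i.e. `b` successors. -/
def Homog (t : TreeData V) (b : ℕ) : Prop := ∀ x, (t.succs x).ncard = b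

/-- The triangle with vertex `x` and height `R`: all descendants of `x` within `R` generations. -/
def tri (t : TreeData V) (x : V) (R : ℕ) : Set V := {y | ∃ j ≤ R, t.pred^[j] y = x}

/-- The base of the triangle with vertex `x` and height `R`: the `R`-fold successors of `x`. -/
def base (t : TreeData V) (x : V) (R : ℕ) : Set V := {y | t.pred^[R] y = x}

/-- The graph distance on the tree. -/
noncomputable def dist (t : TreeData V) (x y : V) : ℕ :=
  sInf {n | ∃ k l : ℕ, k + l = n ∧ t.pred^[k] x = t.pred^[l] y}

/-- Number of points of a set, as an element of `ℝ≥0∞` (counting measure). -/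
noncomputable def esize (E : Set V) : ℝ≥0∞ := ∑' _ : E, (1 : ℝ≥0∞)

/-- The average of `|f|` over a set, with respect to counting measure. -/
noncomputable def setAvg (t : TreeData V) (S : Set V) (f : V → ℝ) : ℝ≥0∞ :=
  (∑' y : S, (‖f y‖₊ : ℝ≥0∞)) / (S.ncard : ℝ≥0∞)

/-- The centred triangular maximal operator `𝒯`. -/
noncomputable def cmax (t : TreeData V) (f : V → ℝ) (x : V) : ℝ≥0∞ :=
  ⨆ R : ℕ, t.setAvg (t.tri x R) f

/-- The uncentred triangular maximal operator `𝒰`. -/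
noncomputable def umax (t : TreeData V) (f : V → ℝ) (x : V) : ℝ≥0∞ :=
  ⨆ (v : V) (R : ℕ) (_ : x ∈ t.tri v R), t.setAvg (t.tri v R) f

/-- The uncentred base maximal operator `ℬᵘ`. -/
noncomputable def ubmax (t : TreeData V) (f : V → ℝ) (x : V) : ℝ≥0∞ :=
  ⨆ (v : V) (R : ℕ) (_ : x ∈ t.tri v R), t.setAvg (t.base v R) f

/-- The modified triangle `T'_r(x) = T_r(x) ∪ {p^r(x)}`. -/
def mtri (t : TreeData V) (x : V) (r : ℕ) : Set V := t.tri x r ∪ {t.pred^[r] x}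

/-- The modified centred triangular maximal operator `𝒯'`. -/
noncomputable def cmax' (t : TreeData V) (f : V → ℝ) (x : V) : ℝ≥0∞ :=
  ⨆ r : ℕ, t.setAvg (t.mtri x r) f

/-- The modified uncentred triangular maximal operator `𝒰'`. -/
noncomputable def umax' (t : TreeData V) (f : V → ℝ) (x : V) : ℝ≥0∞ :=
  ⨆ (v : V) (r : ℕ) (_ : x ∈ t.mtri v r), t.setAvg (t.mtri v r) f

/-- The `ℓ^p` norm with respect to counting measure, for `p ∈ [1,∞]`. -/
noncomputable def eLp (p : ℝ≥0∞) (g : V → ℝ≥0∞) : ℝ≥0∞ :=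
  if p = ∞ then ⨆ v, g v else (∑' v, g v ^ p.toReal) ^ (1 / p.toReal)

/-- `|f|` as an `ℝ≥0∞`-valued function. -/
noncomputable def nn (f : V → ℝ) (x : V) : ℝ≥0∞ := (‖f x‖₊ : ℝ≥0∞)

/-- The point mass at `o`. -/
noncomputable def delta (o : V) : V → ℝ := ({o} : Set V).indicator fun _ => 1

end TreeData

section Aux

namespace TreeData

variable {V : Type*}

lemma ht_iterate (t : TreeData V) (k : ℕ) (x : V) : t.ht (t.pred^[k] x) = t.ht x + k := by
  induction k generalizing x with
  | zero => simp
  | succ k ih =>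
    rw [Function.iterate_succ_apply', t.ht_pred, ih]
    push_cast; ring

lemma base_succ' (t : TreeData V) (x : V) (R : ℕ) :
    t.base x (R + 1) = t.pred ⁻¹' (t.base x R) := by
  ext y
  simp [base, Function.iterate_succ_apply]

lemma preimage_count (t : TreeData V) {b : ℕ} (hhom : t.Homog b) {S : Set V} (hS : S.Finite) :
    (t.pred ⁻¹' S).Finite ∧ (t.pred ⁻¹' S).ncard = b * S.ncard := by
  refine Set.Finite.induction_on (motive := fun S _ => (t.pred ⁻¹' S).Finite ∧
    (t.pred ⁻¹' S).ncard = b * S.ncard) S hS (by simp) ?_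
  intro a s ha hs ih
  have hpre : t.pred ⁻¹' insert a s = t.succs a ∪ t.pred ⁻¹' s := by
    ext y; simp [succs, Set.mem_insert_iff]
  have hsa : (t.succs a).Finite := t.fiber_finite a
  have hdisj : Disjoint (t.succs a) (t.pred ⁻¹' s) := by
    rw [Set.disjoint_left]
    rintro y (hy : t.pred y = a) (hy2 : t.pred y ∈ s)
    exact ha (by rwa [hy] at hy2)
  constructor
  · rw [hpre]; exact hsa.union ih.1
  · rw [hpre, Set.ncard_union_eq hdisj hsa ih.1, ih.2, hhom a,
      Set.ncard_insert_of_notMem ha hs]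
    ring

lemma base_count (t : TreeData V) {b : ℕ} (hhom : t.Homog b) (x : V) (R : ℕ) :
    (t.base x R).Finite ∧ (t.base x R).ncard = b ^ R := by
  induction R with
  | zero =>
    have h0 : t.base x 0 = {x} := by ext y; simp [base]
    rw [h0]; simp
  | succ R ih =>
    rw [base_succ']
    obtain ⟨h1, h2⟩ := preimage_count t hhom ih.1
    exact ⟨h1, by rw [h2, ih.2, pow_succ]; ring⟩

lemma tri_succ' (t : TreeData V) (x : V) (R : ℕ) :
    t.tri x (R + 1) = t.tri x R ∪ t.base x (R + 1) := by
  ext y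
  simp only [tri, base, Set.mem_union, Set.mem_setOf_eq]
  constructor
  · rintro ⟨j, hj, h⟩
    rcases Nat.lt_or_ge j (R + 1) with h' | h'
    · exact Or.inl ⟨j, Nat.lt_succ_iff.mp h', h⟩
    · exact Or.inr (by rwa [le_antisymm hj h'] at h)
  · rintro (⟨j, hj, h⟩ | h)
    · exact ⟨j, Nat.le_succ_of_le hj, h⟩
    · exact ⟨R + 1, le_rfl, h⟩

lemma tri_bound (t : TreeData V) {b : ℕ} (hb : 2 ≤ b) (hhom : t.Homog b) (x : V) (R : ℕ) :
    (t.tri x R).Finite ∧ (t.tri x R).ncard ≤ 2 * b ^ R := by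
  induction R with
  | zero =>
    have h0 : t.tri x 0 = {x} := by
      ext y
      simp only [tri, Set.mem_setOf_eq, Set.mem_singleton_iff, Nat.le_zero]
      constructor
      · rintro ⟨j, rfl, h⟩; simpa using h
      · rintro rfl; exact ⟨0, rfl, rfl⟩
    rw [h0]; simp
  | succ R ih =>
    rw [tri_succ']
    obtain ⟨hf, hc⟩ := base_count t hhom x (R + 1)
    refine ⟨ih.1.union hf, ?_⟩
    have h2 : 2 * b ^ R ≤ b ^ (R + 1) := by
      calc 2 * b ^ R ≤ b * b ^ R := Nat.mul_le_mul_right _ hb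
        _ = b ^ (R + 1) := by rw [pow_succ]; ring
    calc (t.tri x R ∪ t.base x (R + 1)).ncard
        ≤ (t.tri x R).ncard + (t.base x (R + 1)).ncard := Set.ncard_union_le _ _
      _ ≤ 2 * b ^ R + b ^ (R + 1) := by omega
      _ ≤ 2 * b ^ (R + 1) := by omega

lemma part1_lem (t : TreeData V) {b : ℕ} (hb : 2 ≤ b) (hhom : t.Homog b) (o x : V) (m : ℕ)
    (hx : t.pred^[2 * m] x = o) :
    (2 * (b : ℝ≥0∞) ^ m + 1)⁻¹ ≤ t.umax' (delta o) x := by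
  set v := t.pred^[m] x with hv
  have hxv : x ∈ t.mtri v m := Or.inl ⟨m, le_rfl, rfl⟩
  have hpm : t.pred^[m] v = o := by
    rw [hv, ← Function.iterate_add_apply, ← two_mul]; exact hx
  have hov : o ∈ t.mtri v m := Or.inr (by simp [hpm])
  have hnum : (∑' y : (t.mtri v m), (‖delta o (y : V)‖₊ : ℝ≥0∞)) = 1 := by
    rw [tsum_eq_single (⟨o, hov⟩ : (t.mtri v m)) ?_]
    · simp [delta]
    · intro y hy
      have hyo : (y : V) ≠ o := fun h => hy (Subtype.ext h)
      simp [delta, Set.indicator, hyo]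
  have hcard : (t.mtri v m).ncard ≤ 2 * b ^ m + 1 := by
    refine le_trans (Set.ncard_union_le _ _) ?_
    have := (tri_bound t hb hhom v m).2
    simp only [Set.ncard_singleton]
    omega
  have havg : (2 * (b : ℝ≥0∞) ^ m + 1)⁻¹ ≤ t.setAvg (t.mtri v m) (delta o) := by
    rw [setAvg, hnum, ENNReal.div_eq_inv_mul, mul_one]
    refine ENNReal.inv_le_inv.mpr ?_
    calc ((t.mtri v m).ncard : ℝ≥0∞) ≤ ((2 * b ^ m + 1 : ℕ) : ℝ≥0∞) := by
          exact_mod_cast hcard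
      _ = 2 * (b : ℝ≥0∞) ^ m + 1 := by push_cast; ring
  exact havg.trans (le_iSup_of_le v (le_iSup_of_le m (le_iSup_of_le hxv le_rfl)))

lemma key_ineq (b : ℕ) (hb : 2 ≤ b) (j : ℕ) (p : ℝ) (hp : p ≤ 2) :
    (9 : ℝ≥0∞)⁻¹ ≤ (b : ℝ≥0∞) ^ (2 * j) * ((2 * (b : ℝ≥0∞) ^ j + 1) ^ p)⁻¹ := by
  set B : ℝ≥0∞ := (b : ℝ≥0∞) ^ j with hBdef
  have hb1 : (1 : ℝ≥0∞) ≤ (b : ℝ≥0∞) := by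
    exact_mod_cast le_trans (by norm_num) hb
  have hB1 : 1 ≤ B := one_le_pow_of_one_le' hb1 j
  have hBne : B ≠ 0 := by positivity
  have hBnt : B ≠ ∞ := by
    simp [hBdef, ENNReal.pow_eq_top_iff]
  have h1 : (1 : ℝ≥0∞) ≤ 2 * B + 1 := le_add_self
  have hrp : (2 * B + 1) ^ p ≤ (2 * B + 1) ^ (2 : ℝ) :=
    ENNReal.rpow_le_rpow_of_exponent_le h1 hp
  have h3 : 2 * B + 1 ≤ 3 * B := by
    calc 2 * B + 1 ≤ 2 * B + B := by gcongr
      _ = 3 * B := by ring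
  have h2 : (2 * B + 1) ^ (2 : ℝ) ≤ 9 * B ^ 2 := by
    calc (2 * B + 1) ^ (2 : ℝ) ≤ (3 * B) ^ (2 : ℝ) :=
          ENNReal.rpow_le_rpow h3 (by norm_num)
      _ = (3 * B) ^ (2 : ℕ) := by
          rw [← ENNReal.rpow_natCast]; norm_num
      _ = 9 * B ^ 2 := by ring
  have hle : (2 * B + 1) ^ p ≤ 9 * B ^ 2 := hrp.trans h2
  have hbpow : (b : ℝ≥0∞) ^ (2 * j) = B ^ 2 := by
    rw [hBdef, ← pow_mul, mul_comm]
  rw [hbpow]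
  calc (9 : ℝ≥0∞)⁻¹ = B ^ 2 * (9 * B ^ 2)⁻¹ := by
        rw [ENNReal.mul_inv (Or.inl (by norm_num)) (Or.inl (by norm_num))]
        rw [← mul_assoc, mul_comm (B ^ 2), mul_assoc,
          ENNReal.mul_inv_cancel (pow_ne_zero _ hBne) (by simp [hBnt])]
        ring
    _ ≤ B ^ 2 * ((2 * B + 1) ^ p)⁻¹ := by
        gcongr

end TreeData

end Aux

/-- On `𝔗_b`, the modified uncentred maximal operator `𝒰'` satisfies
`𝒰'δ_o(x) ≥ 1/(2b^{|x|/2}+1)` for descendants `x` of `o` at even distance `|x| = 2m`,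
`∑_j b^{2j}(2b^j+1)^{-p}` diverges for `p ≤ 2`, and `𝒰'` is unbounded on `L^p` for every
`p ∈ [1,2]`. -/
theorem stmt18 {V : Type*} (t : TreeData V) (b : ℕ) (hb : 2 ≤ b) (hhom : t.Homog b)
    (o : V) :
    (∀ (x : V) (m : ℕ), t.pred^[2 * m] x = o →
        ((2 * (b : ℝ≥0∞) ^ m + 1))⁻¹ ≤ t.umax' (TreeData.delta o) x) ∧
      (∀ p : ℝ, p ≤ 2 →
        ∑' j : ℕ, (b : ℝ≥0∞) ^ (2 * j) * ((2 * (b : ℝ≥0∞) ^ j + 1) ^ p)⁻¹ = ∞) ∧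
      ∀ p : ℝ, 1 ≤ p → p ≤ 2 →
        ¬ ∃ C : ℝ≥0∞, C < ∞ ∧
            ∀ f : V → ℝ, TreeData.eLp (ENNReal.ofReal p) (t.umax' f) ≤
              C * TreeData.eLp (ENNReal.ofReal p) (TreeData.nn f) := by
  have hb1 : (1 : ℝ≥0∞) ≤ (b : ℝ≥0∞) := by exact_mod_cast le_trans (by norm_num) hb
  refine ⟨fun x m hx => TreeData.part1_lem t hb hhom o x m hx, ?_, ?_⟩
  · intro p hp
    rw [eq_top_iff]
    calc (⊤ : ℝ≥0∞) = ∑' _ : ℕ, (9 : ℝ≥0∞)⁻¹ :=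
          (ENNReal.tsum_const_eq_top_of_ne_zero (by norm_num)).symm
      _ ≤ _ := ENNReal.tsum_le_tsum fun j => TreeData.key_ineq b hb j p hp
  · rintro p hp1 hp2 ⟨C, hC, hbound⟩
    classical
    have hp0 : 0 ≤ p := le_trans zero_le_one hp1
    have hpos : 0 < p := lt_of_lt_of_le zero_lt_one hp1
    have htr : (ENNReal.ofReal p).toReal = p := ENNReal.toReal_ofReal hp0
    have hne : ENNReal.ofReal p ≠ ∞ := ENNReal.ofReal_ne_top
    have hRHS : TreeData.eLp (ENNReal.ofReal p) (TreeData.nn (TreeData.delta o)) = 1 := by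
      rw [TreeData.eLp, if_neg hne, htr]
      have hsum : (∑' v : V, TreeData.nn (TreeData.delta o) v ^ p) = 1 := by
        rw [tsum_eq_single o ?_]
        · simp [TreeData.nn, TreeData.delta, ENNReal.one_rpow]
        · intro v hv
          simp [TreeData.nn, TreeData.delta, Set.indicator, hv,
            ENNReal.zero_rpow_of_pos hpos]
      rw [hsum, ENNReal.one_rpow]
    set g : V → ℝ≥0∞ := fun v => t.umax' (TreeData.delta o) v ^ p with hg
    have hbase : ∀ j : ℕ, (t.base o (2 * j)).Finite ∧ (t.base o (2 * j)).ncard = b ^ (2 * j) :=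
      fun j => TreeData.base_count t hhom o (2 * j)
    set Bf : ℕ → Finset V := fun j => (hbase j).1.toFinset with hBf
    have hmem : ∀ (j : ℕ) (y : V), y ∈ Bf j ↔ t.pred^[2 * j] y = o := by
      intro j y
      rw [hBf]
      exact (hbase j).1.mem_toFinset
    have hT : (∑' v : V, g v) = ∞ := by
      rw [eq_top_iff, ← ENNReal.iSup_natCast]
      refine iSup_le fun n => ?_
      have hpd : Set.PairwiseDisjoint ↑(Finset.range (9 * n)) Bf := by
        intro i _ j _ hij
        refine Finset.disjoint_left.mpr fun y hyi hyj => ?_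
        rw [hmem] at hyi hyj
        have h1 := TreeData.ht_iterate t (2 * i) y
        have h2 := TreeData.ht_iterate t (2 * j) y
        rw [hyi] at h1
        rw [hyj] at h2
        push_cast at h1 h2
        exact hij (by omega)
      have hsumF : ((9 * n : ℕ) : ℝ≥0∞) * 9⁻¹ ≤ ∑ y ∈ (Finset.range (9 * n)).biUnion Bf, g y := by
        rw [Finset.sum_biUnion hpd]
        calc ((9 * n : ℕ) : ℝ≥0∞) * 9⁻¹ = ∑ _j ∈ Finset.range (9 * n), (9 : ℝ≥0∞)⁻¹ := by
              rw [Finset.sum_const, Finset.card_range, nsmul_eq_mul]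
          _ ≤ ∑ j ∈ Finset.range (9 * n), ∑ y ∈ Bf j, g y := by
              refine Finset.sum_le_sum fun j _ => ?_
              have hlow : ∀ y ∈ Bf j, ((2 * (b : ℝ≥0∞) ^ j + 1) ^ p)⁻¹ ≤ g y := by
                intro y hy
                rw [hmem] at hy
                have h := TreeData.part1_lem t hb hhom o y j hy
                calc ((2 * (b : ℝ≥0∞) ^ j + 1) ^ p)⁻¹
                    = ((2 * (b : ℝ≥0∞) ^ j + 1)⁻¹) ^ p := (ENNReal.inv_rpow _ _).symm
                  _ ≤ g y := ENNReal.rpow_le_rpow h hp0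
              have hcard : ((Bf j).card : ℝ≥0∞) = (b : ℝ≥0∞) ^ (2 * j) := by
                have : (Bf j).card = b ^ (2 * j) := by
                  rw [hBf, ← Set.ncard_eq_toFinset_card _ (hbase j).1, (hbase j).2]
                rw [this]
                push_cast
                ring
              calc (9 : ℝ≥0∞)⁻¹
                  ≤ (b : ℝ≥0∞) ^ (2 * j) * ((2 * (b : ℝ≥0∞) ^ j + 1) ^ p)⁻¹ :=
                    TreeData.key_ineq b hb j p hp2
                _ = (Bf j).card • ((2 * (b : ℝ≥0∞) ^ j + 1) ^ p)⁻¹ := by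
                    rw [nsmul_eq_mul, hcard]
                _ ≤ ∑ y ∈ Bf j, g y := Finset.card_nsmul_le_sum _ _ _ hlow
      have hfin : ((9 * n : ℕ) : ℝ≥0∞) * 9⁻¹ ≤ ∑' v, g v :=
        hsumF.trans (ENNReal.sum_le_tsum _)
      have h9n : ((9 * n : ℕ) : ℝ≥0∞) * 9⁻¹ = (n : ℝ≥0∞) := by
        push_cast
        rw [mul_comm (9 : ℝ≥0∞), mul_assoc,
          ENNReal.mul_inv_cancel (by norm_num) (by norm_num), mul_one]
      rwa [h9n] at hfin
    have hLHS : TreeData.eLp (ENNReal.ofReal p) (t.umax' (TreeData.delta o)) = ∞ := by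
      rw [TreeData.eLp, if_neg hne, htr]
      rw [show (∑' v : V, t.umax' (TreeData.delta o) v ^ p) = ∞ from hT]
      exact ENNReal.top_rpow_of_pos (by positivity)
    have hfinal := hbound (TreeData.delta o)
    rw [hLHS, hRHS, mul_one] at hfinal
    exact hC.ne (top_le_iff.mp hfinal)
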